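/- Let x : V → ℝ≥0 and P : V → V → ℝ row-stochastic with entries in [0,1]. For D ⊆ V × V define ρ(u,D) = ∑_{(u,v)∈D} P(u,v) (sum over edges in D outgoing from u), and assume ρ(u,D) < 1 for all u. Then the expected uncertainty after monitoring edges D, namely ∑_{u} x(u)(1-ρ(u,D)) ∑_{(u,v)∉D} (P(u,v)/(1-ρ(u,D)))(1 - P(u,v)/(1-ρ(u,D))), is at most the initial uncertainty ∑_{u} x(u) ∑_{v} P(u,v)(1-P(u,v)). -/

import Mathlib

open Finset

theorem edgeTransitions_decreases_uncertainty
    {V : Type*} [Fintype V] [DecidableEq V]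
    (x : V → ℝ) (hx : ∀ u, 0 ≤ x u)
    (P : V → V → ℝ) (hP0 : ∀ u v, 0 ≤ P u v) (hP1 : ∀ u v, P u v ≤ 1)
    (hrow : ∀ u, ∑ v, P u v = 1)
    (D : Finset (V × V))
    (hρ : ∀ u, ∑ v ∈ univ.filter (fun v => (u, v) ∈ D), P u v < 1) :
    ∑ u, x u * (1 - ∑ v ∈ univ.filter (fun v => (u, v) ∈ D), P u v) *
        ∑ v ∈ univ.filter (fun v => (u, v) ∉ D),
          (P u v / (1 - ∑ w ∈ univ.filter (fun w => (u, w) ∈ D), P u w)) *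
            (1 - P u v / (1 - ∑ w ∈ univ.filter (fun w => (u, w) ∈ D), P u w))
      ≤ ∑ u, x u * ∑ v, P u v * (1 - P u v) := by
  apply Finset.sum_le_sum
  intro u _
  set ρ := ∑ v ∈ univ.filter (fun v => (u, v) ∈ D), P u v with hρdef
  have hρ0 : 0 ≤ ρ := Finset.sum_nonneg fun v _ => hP0 u v
  have hs : 0 < 1 - ρ := by linarith [hρ u]
  have hs1 : 1 - ρ ≤ 1 := by linarith
  have hsplit : ρ + ∑ v ∈ univ.filter (fun v => (u, v) ∉ D), P u v = 1 := by
    rw [hρdef, Finset.sum_filter_add_sum_filter_not]; exact hrow u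
  have hPle : ∀ v ∈ univ.filter (fun v => (u, v) ∉ D), P u v ≤ 1 - ρ := by
    intro v hv
    have := Finset.single_le_sum (f := P u)
      (fun w _ => hP0 u w) hv
    linarith
  have key : (1 - ρ) *
      ∑ v ∈ univ.filter (fun v => (u, v) ∉ D),
        (P u v / (1 - ρ)) * (1 - P u v / (1 - ρ))
      ≤ ∑ v, P u v * (1 - P u v) := by
    rw [Finset.mul_sum]
    have h1 : ∀ v ∈ univ.filter (fun v => (u, v) ∉ D),
        (1 - ρ) * ((P u v / (1 - ρ)) * (1 - P u v / (1 - ρ)))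
          ≤ P u v * (1 - P u v) := by
      intro v _
      have h : (1 - ρ) * ((P u v / (1 - ρ)) * (1 - P u v / (1 - ρ)))
          = P u v * (1 - P u v / (1 - ρ)) := by
        field_simp
      rw [h]
      have : P u v / (1 - ρ) ≥ P u v := by
        rw [ge_iff_le, le_div_iff₀ hs]
        nlinarith [hP0 u v]
      nlinarith [hP0 u v]
    calc ∑ v ∈ univ.filter (fun v => (u, v) ∉ D),
          (1 - ρ) * ((P u v / (1 - ρ)) * (1 - P u v / (1 - ρ)))
        ≤ ∑ v ∈ univ.filter (fun v => (u, v) ∉ D), P u v * (1 - P u v) :=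
          Finset.sum_le_sum h1
      _ ≤ ∑ v, P u v * (1 - P u v) := by
          apply Finset.sum_le_sum_of_subset_of_nonneg (Finset.filter_subset _ _)
          intro v _ _
          nlinarith [hP0 u v, hP1 u v]
  calc x u * (1 - ρ) * ∑ v ∈ univ.filter (fun v => (u, v) ∉ D),
        (P u v / (1 - ρ)) * (1 - P u v / (1 - ρ))
      = x u * ((1 - ρ) * ∑ v ∈ univ.filter (fun v => (u, v) ∉ D),
        (P u v / (1 - ρ)) * (1 - P u v / (1 - ρ))) := by ring
    _ ≤ x u * ∑ v, P u v * (1 - P u v) :=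
        mul_le_mul_of_nonneg_left key (hx u)
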